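/- Fix an integer S ≥ 1 and define the ancestral process (X_i) with values in {1,...,S} as follows: X_0 = S, and conditionally on X_i = t, the value X_{i+1} is distributed as the number of distinct values among t independent uniform draws from {1,...,S}. For a real number S > 1 define the sequence (a_i) by a_0 = 1 and a_{i+1} = 1 - (1 - 1/S)^{a_i · S} (real exponentiation). Then for every i ≥ 0, the expected value of X_i satisfies E[X_i] ≤ a_i · S. -/

import Mathlib

open Finset

private lemma aux_fiber_sum (S t : ℕ) (ht : 1 ≤ t) :
    ∑ v ∈ Icc 1 S, (univ.filter
      (fun f : Fin t → Fin S => (univ.image f).card = v)).card = S ^ t := by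
  have h : (univ : Finset (Fin t → Fin S)).card = S ^ t := by
    simp [Fintype.card_fun]
  rw [← h]
  refine (Finset.card_eq_sum_card_fiberwise ?_).symm
  intro f _
  have ht' : (univ : Finset (Fin t)).Nonempty := by
    simpa [Finset.univ_nonempty_iff] using Fin.pos_iff_nonempty.mp ht
  simp only [Finset.mem_coe, Finset.mem_Icc]
  exact ⟨Finset.card_pos.mpr (ht'.image f),
    by simpa using Finset.card_le_card (Finset.subset_univ (univ.image f))⟩

private lemma aux_sum_image_card (S t : ℕ) (hS : 1 ≤ S) :
    ∑ f : Fin t → Fin S, (((univ.image f).card : ℝ)) =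
      (S : ℝ) * (S:ℝ)^t - (S:ℝ) * ((S:ℝ) - 1)^t := by
  have h1 : ∀ f : Fin t → Fin S, (((univ.image f).card : ℝ)) =
      ∑ y : Fin S, (if y ∈ univ.image f then (1:ℝ) else 0) := by
    intro f
    rw [Finset.sum_ite_mem]
    simp
  simp_rw [h1]
  rw [Finset.sum_comm]
  have h2 : ∀ y : Fin S,
      ∑ f : Fin t → Fin S, (if y ∈ univ.image f then (1:ℝ) else 0)
        = (S:ℝ)^t - ((S:ℝ)-1)^t := by
    intro y
    rw [Finset.sum_boole]
    have hc : (univ.filter (fun f : Fin t → Fin S => y ∈ univ.image f)).card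
        + (univ.filter (fun f : Fin t → Fin S => ¬ (y ∈ univ.image f))).card
        = S ^ t := by
      rw [Finset.card_filter_add_card_filter_not]
      simp [Fintype.card_fun]
    have havoid : (univ.filter (fun f : Fin t → Fin S => ¬ (y ∈ univ.image f))).card
        = (S-1)^t := by
      have h : (univ.filter (fun f : Fin t → Fin S => ¬ (y ∈ univ.image f)))
          = Fintype.piFinset (fun _ : Fin t => univ.erase y) := by
        ext f
        simp [Fintype.mem_piFinset, eq_comm]
      rw [h, Fintype.card_piFinset]
      simp [Finset.card_erase_of_mem]
    have hcard : (univ.filter (fun f : Fin t → Fin S => y ∈ univ.image f)).card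
        = S ^ t - (S-1)^t := by omega
    rw [hcard]
    push_cast [Nat.cast_sub (Nat.pow_le_pow_left (Nat.sub_le S 1) t)]
    congr 1
    push_cast [Nat.cast_sub hS]
    ring
  rw [Finset.sum_congr rfl (fun y _ => h2 y)]
  simp

/-- Fix an integer `S ≥ 2`. The ancestral process `(X_i)` is the Markov chain
on `{1,...,S}` with `X_0 = S` in which, given `X_i = t`, the next state `X_{i+1}` is
distributed as the number of distinct values among `t` independent uniform draws from
`{1,...,S}`.  Here `q i t` is the probability that `X_i = t`, with `P t v` the one-step
transition probability (the probability that a uniformly random function `Fin t → Fin S`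
has image of cardinality `v`), and the expectation `E[X_i]` is `∑ t, t * q i t`.
With `a 0 = 1`, `a (i+1) = 1 - (1 - 1/S) ^ (a i * S)` (real exponentiation),
we have `E[X_i] ≤ a i * S` for every `i`. -/
theorem expected_active_le (S : ℕ) (hS : 2 ≤ S)
    (P : ℕ → ℕ → ℝ)
    (hP : ∀ t v, P t v =
      ((Finset.univ.filter
          (fun f : Fin t → Fin S => (Finset.univ.image f).card = v)).card : ℝ) / (S : ℝ) ^ t)
    (q : ℕ → ℕ → ℝ)
    (hq0 : ∀ t, q 0 t = if t = S then 1 else 0)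
    (hqrec : ∀ i v, q (i + 1) v = ∑ t ∈ Finset.Icc 1 S, q i t * P t v)
    (a : ℕ → ℝ) (ha0 : a 0 = 1)
    (harec : ∀ i, a (i + 1) = 1 - (1 - 1 / (S : ℝ)) ^ (a i * (S : ℝ))) :
    ∀ i, ∑ t ∈ Finset.Icc 1 S, (t : ℝ) * q i t ≤ a i * (S : ℝ) := by
  have hS1 : 1 ≤ S := le_trans (by norm_num) hS
  have hSR : (0:ℝ) < (S:ℝ) := by exact_mod_cast Nat.lt_of_lt_of_le Nat.zero_lt_two hS
  have hSpow : ∀ t : ℕ, (0:ℝ) < (S:ℝ) ^ t := fun t => pow_pos hSR t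
  set c : ℝ := 1 - 1 / (S:ℝ) with hc_def
  have hc0 : 0 < c := by
    rw [hc_def]
    have : 1 / (S:ℝ) ≤ 1/2 := by
      apply one_div_le_one_div_of_le <;> [norm_num; exact_mod_cast hS]
    linarith
  have hc1 : c ≤ 1 := by
    rw [hc_def]
    have : 0 < 1 / (S:ℝ) := by positivity
    linarith
  -- P is nonneg
  have hPnonneg : ∀ t v, 0 ≤ P t v := by
    intro t v
    rw [hP]
    positivity
  -- row sums of P
  have hPsum : ∀ t, 1 ≤ t → ∑ v ∈ Icc 1 S, P t v = 1 := by
    intro t ht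
    simp_rw [hP]
    rw [← Finset.sum_div]
    rw [div_eq_one_iff_eq (ne_of_gt (hSpow t))]
    exact_mod_cast aux_fiber_sum S t ht
  -- expectation of one step
  have hPmean : ∀ t, 1 ≤ t →
      ∑ v ∈ Icc 1 S, (v:ℝ) * P t v = (S:ℝ) * (1 - c ^ t) := by
    intro t ht
    simp_rw [hP]
    have key : ∑ v ∈ Icc 1 S, (v:ℝ) *
        ((univ.filter (fun f : Fin t → Fin S => (univ.image f).card = v)).card : ℝ)
        = (S:ℝ) * (S:ℝ)^t - (S:ℝ) * ((S:ℝ)-1)^t := by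
      rw [← aux_sum_image_card S t hS1]
      rw [← Finset.sum_fiberwise_of_maps_to (g := fun f : Fin t → Fin S => (univ.image f).card)
        (t := Icc 1 S) ?_ (fun f => (((univ.image f).card : ℝ)))]
      · refine Finset.sum_congr rfl (fun v _ => ?_)
        have hinner : ∑ f ∈ univ.filter
            (fun f : Fin t → Fin S => (univ.image f).card = v), (((univ.image f).card : ℝ))
            = ∑ _f ∈ univ.filter
            (fun f : Fin t → Fin S => (univ.image f).card = v), (v:ℝ) :=
          Finset.sum_congr rfl (fun f hf => by
            simp only [Finset.mem_filter] at hf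
            exact_mod_cast congrArg (Nat.cast : ℕ → ℝ) hf.2)
        rw [hinner, Finset.sum_const, nsmul_eq_mul, mul_comm]
      · intro f _
        have ht' : (univ : Finset (Fin t)).Nonempty := by
          simpa [Finset.univ_nonempty_iff] using Fin.pos_iff_nonempty.mp ht
        simp only [mem_Icc]
        exact ⟨Finset.card_pos.mpr (ht'.image f),
          by simpa using Finset.card_le_card (Finset.subset_univ (univ.image f))⟩
    calc ∑ v ∈ Icc 1 S, (v:ℝ) *
        (((univ.filter (fun f : Fin t → Fin S => (univ.image f).card = v)).card : ℝ) / (S:ℝ)^t)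
        = (∑ v ∈ Icc 1 S, (v:ℝ) *
          ((univ.filter (fun f : Fin t → Fin S => (univ.image f).card = v)).card : ℝ)) / (S:ℝ)^t := by
          simp_rw [← mul_div_assoc]; rw [← Finset.sum_div]
      _ = ((S:ℝ) * (S:ℝ)^t - (S:ℝ) * ((S:ℝ)-1)^t) / (S:ℝ)^t := by rw [key]
      _ = (S:ℝ) * (1 - c ^ t) := by
          have hpne : ((S:ℝ)^t) ≠ 0 := ne_of_gt (hSpow t)
          have h1 : c = ((S:ℝ)-1)/(S:ℝ) := by
            rw [hc_def]; field_simp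
          rw [h1, div_pow, div_eq_iff hpne]
          field_simp
  -- q is a probability distribution
  have hqprob : ∀ i, (∀ t ∈ Icc 1 S, 0 ≤ q i t) ∧ (∑ t ∈ Icc 1 S, q i t = 1) := by
    intro i
    induction i with
    | zero =>
      constructor
      · intro t _; rw [hq0]; split <;> norm_num
      · rw [Finset.sum_congr rfl (fun t _ => hq0 t)]
        rw [Finset.sum_ite_eq' (Icc 1 S) S (fun _ => (1:ℝ))]
        simp [mem_Icc, hS1]
    | succ i ih =>
      constructor
      · intro v _
        rw [hqrec]
        exact Finset.sum_nonneg fun t ht => mul_nonneg (ih.1 t ht) (hPnonneg t v)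
      · simp_rw [hqrec]
        rw [Finset.sum_comm]
        rw [Finset.sum_congr rfl (fun t ht => ?_)]
        · exact ih.2
        · rw [← Finset.mul_sum, hPsum t (Finset.mem_Icc.mp ht).1, mul_one]
  -- concavity
  have hconv : ConvexOn ℝ Set.univ (fun x : ℝ => c ^ x) := by
    have h : (fun x : ℝ => c ^ x) = fun x => Real.exp (Real.log c * x) := by
      funext x; rw [Real.rpow_def_of_pos hc0]
    rw [h]
    have := convexOn_exp.comp_affineMap ((LinearMap.lsmul ℝ ℝ (Real.log c)).toAffineMap)
    have e : (Real.exp ∘ ⇑((LinearMap.lsmul ℝ ℝ) (Real.log c)).toAffineMap)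
        = fun x => Real.exp (Real.log c * x) := by funext x; simp
    rw [e, Set.preimage_univ] at this
    exact this
  have hconc : ConcaveOn ℝ Set.univ (fun x : ℝ => 1 - c ^ x) := by
    have := hconv.neg.add_const 1
    have e : ((-fun x : ℝ => c ^ x) + fun _ => (1:ℝ)) = fun x : ℝ => 1 - c ^ x := by
      funext x; simp only [Pi.add_apply, Pi.neg_apply]; ring
    rw [e] at this
    exact this
  -- main induction
  intro i
  induction i with
  | zero =>
    rw [ha0, one_mul]
    rw [Finset.sum_congr rfl (fun t _ => by rw [hq0])]
    rw [Finset.sum_congr rfl (fun t _ => ?_)]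
    · rw [Finset.sum_ite_eq' (Icc 1 S) S (fun t => (t:ℝ))]
      simp [mem_Icc, hS1]
    · rw [mul_ite, mul_one, mul_zero]
  | succ i ih =>
    have hq := hqprob i
    -- E_{i+1} = ∑_t q i t * (S * (1 - c^t))
    have hstep : ∑ v ∈ Icc 1 S, (v:ℝ) * q (i+1) v
        = ∑ t ∈ Icc 1 S, q i t * ((S:ℝ) * (1 - c ^ t)) := by
      simp_rw [hqrec, Finset.mul_sum]
      rw [Finset.sum_comm]
      refine Finset.sum_congr rfl (fun t ht => ?_)
      rw [← hPmean t (Finset.mem_Icc.mp ht).1, Finset.mul_sum]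
      exact Finset.sum_congr rfl (fun v _ => by ring)
    rw [hstep]
    -- Jensen
    have hjensen : ∑ t ∈ Icc 1 S, q i t • (1 - c ^ ((t:ℕ):ℝ))
        ≤ 1 - c ^ (∑ t ∈ Icc 1 S, q i t • ((t:ℕ):ℝ)) := by
      exact hconc.le_map_sum hq.1 hq.2 (fun t _ => Set.mem_univ _)
    have hE : ∑ t ∈ Icc 1 S, q i t • ((t:ℕ):ℝ) ≤ a i * (S:ℝ) := by
      simpa [smul_eq_mul, mul_comm] using ih
    have hmono : 1 - c ^ (∑ t ∈ Icc 1 S, q i t • ((t:ℕ):ℝ)) ≤ 1 - c ^ (a i * (S:ℝ)) := by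
      have := Real.rpow_le_rpow_of_exponent_ge hc0 hc1 hE
      linarith
    have hfinal : ∑ t ∈ Icc 1 S, q i t • (1 - c ^ ((t:ℕ):ℝ)) ≤ 1 - c ^ (a i * (S:ℝ)) :=
      le_trans hjensen hmono
    have : ∑ t ∈ Icc 1 S, q i t * ((S:ℝ) * (1 - c ^ t))
        = (S:ℝ) * ∑ t ∈ Icc 1 S, q i t • (1 - c ^ ((t:ℕ):ℝ)) := by
      rw [Finset.mul_sum]
      refine Finset.sum_congr rfl (fun t _ => ?_)
      rw [smul_eq_mul, Real.rpow_natCast]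
      ring
    rw [this, harec, hc_def]
    calc (S:ℝ) * ∑ t ∈ Icc 1 S, q i t • (1 - c ^ ((t:ℕ):ℝ))
        ≤ (S:ℝ) * (1 - c ^ (a i * (S:ℝ))) := by
          exact mul_le_mul_of_nonneg_left hfinal (le_of_lt hSR)
      _ = (1 - (1 - 1/(S:ℝ)) ^ (a i * (S:ℝ))) * (S:ℝ) := by rw [← hc_def]; ring
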